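/- An MSR subspace family of F_q^2 (i.e., a set of 1-dimensional subspaces such that for each member S there exists an element of PGL(2,q) mapping S to a subspace intersecting S trivially while fixing every other member setwise) has at most 3 elements. -/

import Mathlib

open Submodule Module

/-- A set `𝒮` of `m`-dimensional subspaces of `V` is a minimum storage regenerating (MSR)
subspace family if for each member `S` there is an invertible linear map (an element of
`PGL`, acting on subspaces) sending `S` to a subspace meeting `S` trivially while fixing
every other member setwise. -/
def IsMSRFamily {F V : Type*} [Field F] [AddCommGroup V] [Module F V]
    (m : ℕ) (𝒮 : Set (Submodule F V)) : Prop :=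
  (∀ S ∈ 𝒮, finrank F S = m) ∧
  ∀ S ∈ 𝒮, ∃ g : V ≃ₗ[F] V,
    S.map (g : V →ₗ[F] V) ⊓ S = ⊥ ∧
    ∀ T ∈ 𝒮, T ≠ S → T.map (g : V →ₗ[F] V) = T

section Aux

variable {F V : Type*} [Field F] [AddCommGroup V] [Module F V] [FiniteDimensional F V]

lemma aux_span_of_rank_one (S : Submodule F V) (h : finrank F S = 1) :
    ∃ v : V, v ≠ 0 ∧ S = span F {v} := by
  obtain ⟨v, hv⟩ := (Submodule.finrank_le_one_iff_isPrincipal S).1 h.le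
  refine ⟨v, ?_, hv⟩
  rintro rfl
  rw [hv, span_zero_singleton] at h
  simp at h

-- eigenvector from invariant line
lemma aux_eigen (g : V ≃ₗ[F] V) (v : V) (hv : v ≠ 0)
    (hinv : (span F {v}).map (g : V →ₗ[F] V) = span F {v}) :
    ∃ a : F, a ≠ 0 ∧ g v = a • v := by
  have h1 : g v ∈ span F {v} := by
    rw [← hinv]
    exact Submodule.mem_map_of_mem (mem_span_singleton_self v)
  obtain ⟨a, ha⟩ := mem_span_singleton.1 h1
  refine ⟨a, ?_, ha.symm⟩
  rintro rfl
  simp only [zero_smul] at ha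
  exact hv (g.map_eq_zero_iff.1 ha.symm)

end Aux

-- a linear automorphism of a 2-dim space fixing 3 distinct lines is scalar
lemma aux_scalar {F : Type*} [Field F] {V : Type*} [AddCommGroup V] [Module F V]
    [FiniteDimensional F V] (hdim : finrank F V = 2)
    (g : V ≃ₗ[F] V) (T₁ T₂ T₃ : Submodule F V)
    (h1 : finrank F T₁ = 1) (h2 : finrank F T₂ = 1) (h3 : finrank F T₃ = 1)
    (h12 : T₁ ≠ T₂) (h13 : T₁ ≠ T₃) (h23 : T₂ ≠ T₃)
    (hg1 : T₁.map (g : V →ₗ[F] V) = T₁) (hg2 : T₂.map (g : V →ₗ[F] V) = T₂)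
    (hg3 : T₃.map (g : V →ₗ[F] V) = T₃) :
    ∃ a : F, a ≠ 0 ∧ ∀ v : V, g v = a • v := by
  obtain ⟨v₁, hv₁, rfl⟩ := aux_span_of_rank_one T₁ h1
  obtain ⟨v₂, hv₂, rfl⟩ := aux_span_of_rank_one T₂ h2
  obtain ⟨v₃, hv₃, rfl⟩ := aux_span_of_rank_one T₃ h3
  obtain ⟨a₁, ha₁, he₁⟩ := aux_eigen g v₁ hv₁ hg1
  obtain ⟨a₂, ha₂, he₂⟩ := aux_eigen g v₂ hv₂ hg2
  obtain ⟨a₃, ha₃, he₃⟩ := aux_eigen g v₃ hv₃ hg3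
  -- v₂ ∉ span v₁
  have hnot : v₂ ∉ span F {v₁} := by
    intro hmem
    refine h12 (le_antisymm ((span_singleton_le_iff_mem _ _).2 ?_)
      ((span_singleton_le_iff_mem _ _).2 hmem))
    obtain ⟨c, hc⟩ := mem_span_singleton.1 hmem
    have hc0 : c ≠ 0 := by rintro rfl; simp at hc; exact hv₂ hc.symm
    rw [mem_span_singleton]
    exact ⟨c⁻¹, by rw [← hc, smul_smul, inv_mul_cancel₀ hc0, one_smul]⟩
  -- uniqueness of representation
  have huniq : ∀ d₁ d₂ : F, d₁ • v₁ + d₂ • v₂ = 0 → d₁ = 0 ∧ d₂ = 0 := by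
    intro d₁ d₂ hd
    have hd2 : d₂ = 0 := by
      by_contra hd2
      apply hnot
      have hmem : d₂ • v₂ ∈ span F {v₁} := by
        rw [show d₂ • v₂ = (-d₁) • v₁ by linear_combination (norm := module) hd]
        exact smul_mem _ _ (mem_span_singleton_self v₁)
      have h' := Submodule.smul_mem _ d₂⁻¹ hmem
      rwa [smul_smul, inv_mul_cancel₀ hd2, one_smul] at h'
    subst hd2
    simp only [zero_smul, add_zero, smul_eq_zero] at hd
    exact ⟨hd.resolve_right hv₁, rfl⟩
  -- sup is top
  have hsup : span F {v₁} ⊔ span F {v₂} = ⊤ := by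
    have hinf : span F {v₁} ⊓ span F {v₂} = ⊥ := by
      rw [eq_bot_iff]
      intro x ⟨hx1, hx2⟩
      obtain ⟨c, rfl⟩ := mem_span_singleton.1 hx1
      obtain ⟨d, hd⟩ := mem_span_singleton.1 hx2
      have := huniq c (-d) (by linear_combination (norm := module) hd.symm)
      simp [this.1]
    apply Submodule.eq_top_of_finrank_eq
    have := Submodule.finrank_sup_add_finrank_inf_eq (span F {v₁}) (span F {v₂})
    rw [hinf, h1, h2] at this
    simp only [finrank_bot, add_zero] at this
    omega
  -- write v₃ = c₁ v₁ + c₂ v₂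
  have hv3mem : v₃ ∈ span F {v₁} ⊔ span F {v₂} := hsup ▸ mem_top
  obtain ⟨x, hx, y, hy, hxy⟩ := Submodule.mem_sup.1 hv3mem
  obtain ⟨c₁, rfl⟩ := mem_span_singleton.1 hx
  obtain ⟨c₂, rfl⟩ := mem_span_singleton.1 hy
  have hc₁ : c₁ ≠ 0 := by
    rintro rfl
    apply h23
    simp only [zero_smul, zero_add] at hxy
    have hc₂ : c₂ ≠ 0 := by rintro rfl; simp at hxy; exact hv₃ hxy.symm
    rw [← hxy]
    rw [span_singleton_smul_eq]
    exact Ne.isUnit hc₂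
  have hc₂ : c₂ ≠ 0 := by
    rintro rfl
    apply h13
    simp only [zero_smul, add_zero] at hxy
    have hc₁' : c₁ ≠ 0 := by rintro rfl; simp at hxy; exact hv₃ hxy.symm
    rw [← hxy, span_singleton_smul_eq]
    exact Ne.isUnit hc₁'
  -- apply g to v₃
  have key : g v₃ = (c₁ * a₁) • v₁ + (c₂ * a₂) • v₂ := by
    rw [← hxy, map_add, map_smul, map_smul, he₁, he₂]
    module
  have key2 : g v₃ = (a₃ * c₁) • v₁ + (a₃ * c₂) • v₂ := by
    rw [he₃, ← hxy]
    module
  have heq : (c₁ * a₁ - a₃ * c₁) • v₁ + (c₂ * a₂ - a₃ * c₂) • v₂ = 0 := by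
    have := key.symm.trans key2
    linear_combination (norm := module) this
  obtain ⟨e1, e2⟩ := huniq _ _ heq
  have ha13 : a₁ = a₃ := by
    have h' : c₁ * (a₁ - a₃) = 0 := by linear_combination e1
    rcases mul_eq_zero.1 h' with h'' | h''
    · exact absurd h'' hc₁
    · exact sub_eq_zero.1 h''
  have ha23 : a₂ = a₃ := by
    have h' : c₂ * (a₂ - a₃) = 0 := by linear_combination e2
    rcases mul_eq_zero.1 h' with h'' | h''
    · exact absurd h'' hc₂
    · exact sub_eq_zero.1 h''
  refine ⟨a₁, ha₁, fun v => ?_⟩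
  have hvmem : v ∈ span F {v₁} ⊔ span F {v₂} := hsup ▸ mem_top
  obtain ⟨x, hx, y, hy, rfl⟩ := Submodule.mem_sup.1 hvmem
  obtain ⟨d₁, rfl⟩ := mem_span_singleton.1 hx
  obtain ⟨d₂, rfl⟩ := mem_span_singleton.1 hy
  rw [map_add, map_smul, map_smul, he₁, he₂, ha13, ha23]
  module


/-- An MSR subspace family of `F_q^2` has at most 3 elements. -/
theorem stmt0 (F : Type*) [Field F] [Fintype F]
    (𝒮 : Set (Submodule F (Fin 2 → F))) (h : IsMSRFamily 1 𝒮) :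
    𝒮.ncard ≤ 3 := by
  by_contra hcon
  push_neg at hcon
  have hne : 𝒮.ncard ≠ 0 := by omega
  have hfin : 𝒮.Finite := Set.finite_of_ncard_ne_zero hne
  obtain ⟨S, hS⟩ := Set.nonempty_of_ncard_ne_zero hne
  obtain ⟨g, hg0, hgfix⟩ := h.2 S hS
  have hc1 : 3 ≤ (𝒮 \ {S}).ncard := by
    rw [Set.ncard_diff_singleton_of_mem hS]; omega
  obtain ⟨T₁, hT₁⟩ := Set.nonempty_of_ncard_ne_zero (s := 𝒮 \ {S}) (by omega)
  have hc2 : 2 ≤ ((𝒮 \ {S}) \ {T₁}).ncard := by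
    rw [Set.ncard_diff_singleton_of_mem hT₁]; omega
  obtain ⟨T₂, hT₂⟩ := Set.nonempty_of_ncard_ne_zero (s := (𝒮 \ {S}) \ {T₁}) (by omega)
  have hc3 : 1 ≤ (((𝒮 \ {S}) \ {T₁}) \ {T₂}).ncard := by
    rw [Set.ncard_diff_singleton_of_mem hT₂]; omega
  obtain ⟨T₃, hT₃⟩ := Set.nonempty_of_ncard_ne_zero (s := ((𝒮 \ {S}) \ {T₁}) \ {T₂}) (by omega)
  obtain ⟨⟨⟨hT₃S, hT₃Sne⟩, hT₃T₁⟩, hT₃T₂⟩ := hT₃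
  obtain ⟨⟨hT₂S, hT₂Sne⟩, hT₂T₁⟩ := hT₂
  obtain ⟨hT₁S, hT₁Sne⟩ := hT₁
  simp only [Set.mem_singleton_iff] at hT₁Sne hT₂Sne hT₂T₁ hT₃Sne hT₃T₁ hT₃T₂
  have hdim : finrank F (Fin 2 → F) = 2 := by simp
  obtain ⟨a, ha, hga⟩ := aux_scalar hdim g T₁ T₂ T₃
    (h.1 T₁ hT₁S) (h.1 T₂ hT₂S) (h.1 T₃ hT₃S)
    (Ne.symm hT₂T₁) (Ne.symm hT₃T₁) (Ne.symm hT₃T₂)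
    (hgfix T₁ hT₁S hT₁Sne) (hgfix T₂ hT₂S hT₂Sne) (hgfix T₃ hT₃S hT₃Sne)
  have hmap : S.map (g : (Fin 2 → F) →ₗ[F] (Fin 2 → F)) = S := by
    apply le_antisymm
    · rintro x ⟨y, hy, rfl⟩
      simpa [hga y] using S.smul_mem a hy
    · intro x hx
      refine ⟨a⁻¹ • x, S.smul_mem _ hx, ?_⟩
      show g (a⁻¹ • x) = x
      rw [map_smul, hga, smul_smul, inv_mul_cancel₀ ha, one_smul]
  rw [hmap, inf_idem] at hg0
  have := h.1 S hS
  rw [hg0] at this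
  simp at this
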